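/- Let A be an Artinian local Λ-algebra with residue field k, generated as a Λ-algebra by the images of two local Λ-algebra homomorphisms x, y : F → A from a complete local Λ-algebra F. If x and y induce the same map on cotangent spaces F/(m_F² + m_Λ F) → A/(m_A² + m_Λ A), then both x and y are surjective. -/

import Mathlib

open IsLocalRing

/-- A local `Λ`-algebra map into an Artinian local ring whose image, together with
`m_A² + m_Λ A`, is everything, is surjective. -/
private lemma aux_surjective_of_dense
    {Λ F A : Type*} [CommRing Λ] [IsLocalRing Λ]
    [CommRing F] [Algebra Λ F] [IsLocalRing F]
    [IsLocalHom (algebraMap Λ F)]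
    [CommRing A] [Algebra Λ A] [IsArtinianRing A] [IsLocalRing A]
    (x : F →ₐ[Λ] A) (hx : IsLocalHom x.toRingHom)
    (h : ∀ a : A, ∃ f : F,
      a - x f ∈ maximalIdeal A ^ 2 ⊔ Ideal.map (algebraMap Λ A) (maximalIdeal Λ)) :
    Function.Surjective x := by
  set m := maximalIdeal A with hm
  set I : Ideal A := m ^ 2 ⊔ Ideal.map (algebraMap Λ A) (maximalIdeal Λ) with hIdef
  set J : Ideal A := Ideal.map x.toRingHom (maximalIdeal F) with hJdef
  -- images of elements of `m_F` are in `m`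
  have hxm : ∀ f ∈ maximalIdeal F, x f ∈ m := by
    intro f hf
    rw [hm, mem_maximalIdeal, mem_nonunits_iff]
    intro hu
    exact hf (hx.map_nonunit f hu)
  have hJm : J ≤ m := Ideal.map_le_iff_le_comap.2 (fun f hf => hxm f hf)
  -- `m_Λ A ≤ J`
  have hmA : Ideal.map (algebraMap Λ A) (maximalIdeal Λ) ≤ J := by
    have hcomp : (algebraMap Λ A) = x.toRingHom.comp (algebraMap Λ F) :=
      (x.comp_algebraMap).symm
    rw [hcomp, ← Ideal.map_map]
    refine Ideal.map_mono (Ideal.map_le_iff_le_comap.2 ?_)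
    intro c hc
    simp only [Ideal.mem_comap, mem_maximalIdeal, mem_nonunits_iff]
    intro hu
    exact hc ((inferInstance : IsLocalHom (algebraMap Λ F)).map_nonunit c hu)
  have hIm : I ≤ m := sup_le (Ideal.pow_le_self two_ne_zero) (hmA.trans hJm)
  have hIJ : I ≤ J ⊔ m ^ 2 := sup_le le_sup_right (hmA.trans le_sup_left)
  -- `m ≤ J ⊔ m²`
  have hstep : m ≤ J ⊔ m ^ 2 := by
    intro t ht
    obtain ⟨f, hf⟩ := h t
    have hxfm : x f ∈ m := by
      have : x f = t - (t - x f) := by ring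
      rw [this]; exact sub_mem ht (hIm hf)
    have hfm : f ∈ maximalIdeal F := by
      rw [mem_maximalIdeal, mem_nonunits_iff]
      intro hu
      have : IsUnit (x f) := hu.map x
      rw [hm, mem_maximalIdeal, mem_nonunits_iff] at hxfm
      exact hxfm this
    have : t = x f + (t - x f) := by ring
    rw [this]
    exact add_mem (Ideal.mem_sup_left (Ideal.mem_map_of_mem _ hfm)) (hIJ hf)
  -- iterate: `m ≤ J ⊔ m^(k+1)` for all `k`
  have hind : ∀ k : ℕ, m ≤ J ⊔ m ^ (k + 1) := by
    intro k
    induction k with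
    | zero => simp [pow_one]
    | succ k ih =>
      refine hstep.trans (sup_le le_sup_left ?_)
      calc m ^ 2 = m * m := sq m
        _ ≤ m * (J ⊔ m ^ (k + 1)) := Ideal.mul_mono_right ih
        _ = m * J ⊔ m * m ^ (k + 1) := Ideal.mul_sup m J _
        _ ≤ J ⊔ m ^ (k + 1 + 1) := by
            refine sup_le_sup (Ideal.mul_le.2 fun _ _ _ hb => Ideal.mul_mem_left _ _ hb) (le_of_eq ?_)
            ring
  -- `m` is nilpotent
  obtain ⟨n, hn⟩ : IsNilpotent m := by
    have := IsArtinianRing.isNilpotent_jacobson_bot (R := A)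
    rwa [jacobson_eq_maximalIdeal ⊥ bot_ne_top] at this
  have hpow : m ^ (n + 1) = ⊥ := by
    rw [pow_succ, hn]
    exact zero_mul m
  -- hence `m = J`
  have hmJ : m = J := by
    refine le_antisymm ?_ hJm
    have := hind n
    rwa [hpow, sup_bot_eq] at this
  -- approximation: every element of `m` is `x f` mod `m ^ k`, with `f ∈ m_F`
  have P : ∀ k : ℕ, ∀ a ∈ m, ∃ f ∈ maximalIdeal F, a - x f ∈ m ^ k := by
    intro k
    induction k with
    | zero =>
      intro a _
      exact ⟨0, zero_mem _, by simp⟩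
    | succ k ih =>
      intro a ha
      rw [hmJ] at ha
      have ha' : a ∈ Ideal.span (x.toRingHom '' (maximalIdeal F : Set F)) := ha
      refine Submodule.span_induction
        (p := fun a _ => ∃ f ∈ maximalIdeal F, a - x f ∈ m ^ (k + 1))
        ?_ ?_ ?_ ?_ ha'
      · rintro _ ⟨g, hg, rfl⟩
        exact ⟨g, hg, by simp⟩
      · exact ⟨0, zero_mem _, by simp⟩
      · rintro p q hp hq ⟨f, hfm, hf⟩ ⟨f', hfm', hf'⟩
        refine ⟨f + f', add_mem hfm hfm', ?_⟩
        have : p + q - x (f + f') = (p - x f) + (q - x f') := by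
          rw [map_add]; ring
        rw [this]
        exact add_mem hf hf'
      · rintro r p hp ⟨f, hfm, hf⟩
        obtain ⟨c, hc⟩ := h r
        have htm : r - x c ∈ m := hIm hc
        obtain ⟨f₁, hf₁m, hf₁⟩ := ih (r - x c) htm
        have hxf : x f ∈ m := hxm f hfm
        refine ⟨(c + f₁) * f, Ideal.mul_mem_left _ _ hfm, ?_⟩
        have key : r • p - x ((c + f₁) * f) =
            (x c + x f₁) * (p - x f) + ((r - x c) - x f₁) * x f
              + ((r - x c) - x f₁) * (p - x f) := by
          simp only [smul_eq_mul, map_mul, map_add]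
          ring
        rw [key]
        refine add_mem (add_mem (Ideal.mul_mem_left _ _ hf) ?_)
          (Ideal.mul_mem_left _ _ hf)
        rw [pow_succ]
        exact Ideal.mul_mem_mul hf₁ hxf
  -- conclude
  intro a₀
  obtain ⟨f, hf⟩ := h a₀
  obtain ⟨f₂, _, hf₂⟩ := P (n + 1) (a₀ - x f) (hIm hf)
  rw [hpow, Ideal.mem_bot] at hf₂
  refine ⟨f + f₂, ?_⟩
  rw [map_add]
  linear_combination -hf₂

/-- Let `A` be an Artinian local `Λ`-algebra with residue field `k`,
generated as a `Λ`-algebra by the images of two local `Λ`-algebra homomorphisms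
`x, y : F → A` from a complete local `Λ`-algebra `F`. If `x` and `y` induce the same
map on cotangent spaces `F/(m_F² + m_Λ F) → A/(m_A² + m_Λ A)`, then both `x` and `y`
are surjective. -/
theorem surjective_of_generating_and_equal_on_cotangent
    {Λ F A : Type*} [CommRing Λ] [IsLocalRing Λ]
    [CommRing F] [Algebra Λ F] [IsLocalRing F] [IsAdicComplete (maximalIdeal F) F]
    [IsLocalHom (algebraMap Λ F)]
    [CommRing A] [Algebra Λ A] [IsArtinianRing A] [IsLocalRing A]
    [IsLocalHom (algebraMap Λ A)]
    (hres : ∀ a : A, ∃ c : Λ, a - algebraMap Λ A c ∈ maximalIdeal A)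
    (x y : F →ₐ[Λ] A) (hx : IsLocalHom x.toRingHom) (hy : IsLocalHom y.toRingHom)
    (hgen : Algebra.adjoin Λ (Set.range x ∪ Set.range y) = ⊤)
    (hcot : ∀ z : F,
      x z - y z ∈ maximalIdeal A ^ 2 ⊔ Ideal.map (algebraMap Λ A) (maximalIdeal Λ)) :
    Function.Surjective x ∧ Function.Surjective y := by
  set I : Ideal A := maximalIdeal A ^ 2 ⊔ Ideal.map (algebraMap Λ A) (maximalIdeal Λ)
    with hIdef
  -- every element of `A` is in the image of `z` modulo `I`, for `z = x` and `z = y`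
  have main : ∀ z w : F →ₐ[Λ] A, (∀ u : F, z u - w u ∈ I) →
      Algebra.adjoin Λ (Set.range z ∪ Set.range w) = ⊤ →
      ∀ a : A, ∃ f : F, a - z f ∈ I := by
    intro z w hzw hzwgen a
    have ha : a ∈ Algebra.adjoin Λ (Set.range z ∪ Set.range w) := by
      rw [hzwgen]; trivial
    refine Algebra.adjoin_induction
      (p := fun a _ => ∃ f : F, a - z f ∈ I) ?_ ?_ ?_ ?_ ha
    · rintro _ (⟨u, rfl⟩ | ⟨u, rfl⟩)
      · exact ⟨u, by simp⟩
      · refine ⟨u, ?_⟩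
        have : w u - z u = -(z u - w u) := by ring
        rw [this]
        exact neg_mem (hzw u)
    · intro r
      refine ⟨algebraMap Λ F r, ?_⟩
      rw [z.commutes]
      simp
    · rintro p q hp hq ⟨f, hf⟩ ⟨f', hf'⟩
      refine ⟨f + f', ?_⟩
      have : p + q - z (f + f') = (p - z f) + (q - z f') := by rw [map_add]; ring
      rw [this]
      exact add_mem hf hf'
    · rintro p q hp hq ⟨f, hf⟩ ⟨f', hf'⟩
      refine ⟨f * f', ?_⟩
      have : p * q - z (f * f') = p * (q - z f') + (p - z f) * z f' := by
        rw [map_mul]; ring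
      rw [this]
      exact add_mem (Ideal.mul_mem_left _ _ hf') (Ideal.mul_mem_right _ _ hf)
  constructor
  · exact aux_surjective_of_dense x hx (main x y hcot hgen)
  · refine aux_surjective_of_dense y hy (main y x ?_ ?_)
    · intro u
      have : y u - x u = -(x u - y u) := by ring
      rw [this]
      exact neg_mem (hcot u)
    · rwa [Set.union_comm]
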